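/- For any prime p ≥ 5, the Gaussian binomial coefficient C(2p, p)_q satisfies C(2p, p)_q ≡ 1 + q^{p^2} − ((p^2−1)/12)·(q^p − 1)^2 modulo [p]_q^3 in ℤ[q]. -/

import Mathlib

open Polynomial Finset

noncomputable def qInt (n : ℕ) : Polynomial ℤ := ∑ i ∈ Finset.range n, X ^ i

noncomputable def qBinom : ℕ → ℕ → Polynomial ℤ
  | _, 0 => 1
  | 0, _ + 1 => 0
  | n + 1, k + 1 => qBinom n k + X ^ (k + 1) * qBinom n (k + 1)

noncomputable def qFact (n : ℕ) : Polynomial ℤ := ∏ i ∈ Finset.range n, qInt (i + 1)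

lemma qInt_add (a b : ℕ) : qInt (a + b) = qInt a + X ^ a * qInt b := by
  simp [qInt, Finset.sum_range_add, Finset.mul_sum, pow_add]

lemma qBinom_zero (n : ℕ) : qBinom n 0 = 1 := by cases n <;> rfl

lemma qBinom_eq_zero : ∀ n k : ℕ, n < k → qBinom n k = 0
  | _, 0, h => absurd h (Nat.not_lt_zero _)
  | 0, k + 1, _ => rfl
  | n + 1, k + 1, h => by
    rw [qBinom, qBinom_eq_zero n k (by omega), qBinom_eq_zero n (k+1) (by omega)]
    ring

lemma qBinom_self : ∀ n : ℕ, qBinom n n = 1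
  | 0 => rfl
  | n + 1 => by
    rw [qBinom, qBinom_self n, qBinom_eq_zero n (n+1) (by omega)]
    ring

lemma qFact_succ (n : ℕ) : qFact (n + 1) = qFact n * qInt (n + 1) :=
  Finset.prod_range_succ _ _

lemma qBinom_mul_fact : ∀ n k : ℕ, k ≤ n → qBinom n k * (qFact k * qFact (n - k)) = qFact n
  | n, 0, _ => by simp [qBinom_zero, qFact]
  | 0, k + 1, h => by omega
  | n + 1, k + 1, h => by
    rcases eq_or_lt_of_le h with he | hlt
    · rw [← he, qBinom_self]
      simp [qFact]
    · have hk : k ≤ n := by omega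
      have hk1 : k + 1 ≤ n := by omega
      have h1 : qFact (k + 1) = qFact k * qInt (k + 1) := qFact_succ k
      have h2 : n + 1 - (k + 1) = (n - (k+1)) + 1 := by omega
      have h3 : qFact (n + 1 - (k+1)) = qFact (n - (k+1)) * qInt (n - k) := by
        rw [h2, qFact_succ]
        congr 2
        omega
      have h4 : n - k = n - (k+1) + 1 := by omega
      rw [qBinom, add_mul, h1, h3]
      have h5 : qFact (n - k) = qFact (n - (k+1)) * qInt (n - k) := by
        rw [h4, qFact_succ]
      have e1 : qBinom n k * (qFact k * qInt (k+1) * (qFact (n - (k+1)) * qInt (n-k)))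
          = (qBinom n k * (qFact k * qFact (n - k))) * qInt (k+1) := by
        rw [h5]; ring
      have e2 : X ^ (k+1) * qBinom n (k+1) * (qFact k * qInt (k+1) * (qFact (n - (k+1)) * qInt (n-k)))
          = X ^ (k+1) * ((qBinom n (k+1) * (qFact (k+1) * qFact (n - (k+1))))) * qInt (n-k) := by
        rw [h1]; ring
      rw [e1, e2, qBinom_mul_fact n k hk, qBinom_mul_fact n (k+1) hk1]
      have : qInt (n + 1) = qInt (k+1) + X ^ (k+1) * qInt (n - k) := by
        rw [← qInt_add]; congr 1; omega
      rw [qFact_succ, this]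
      ring

lemma qInt_eval_one (n : ℕ) : eval 1 (qInt n) = n := by
  simp [qInt, eval_finset_sum]

lemma qInt_ne_zero {n : ℕ} (h : 0 < n) : qInt n ≠ 0 := by
  intro hc
  have := qInt_eval_one n
  rw [hc] at this
  simp at this
  omega

lemma qFact_ne_zero (n : ℕ) : qFact n ≠ 0 := by
  rw [qFact, Finset.prod_ne_zero_iff]
  exact fun i _ => qInt_ne_zero (Nat.succ_pos i)

lemma one_add_pow (w : Polynomial ℤ) :
    ∀ k : ℕ, ∃ ρ, (1 + w)^k = 1 + (k : Polynomial ℤ)*w + ((k.choose 2 : ℕ) : Polynomial ℤ)*w^2 + w^3*ρ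
  | 0 => ⟨0, by simp⟩
  | k + 1 => by
    obtain ⟨ρ, hρ⟩ := one_add_pow w k
    refine ⟨ρ + ((k.choose 2 : ℕ) : Polynomial ℤ) + w*ρ, ?_⟩
    have hch : ((k+1).choose 2 : ℕ) = k.choose 2 + k := by
      rw [Nat.choose_succ_succ]
      simp [Nat.choose_one_right]
      omega
    rw [pow_succ, hρ, hch]
    push_cast
    ring

lemma prod_add_sq {R : Type*} [CommRing R] (b : R) (f : ℕ → R) (s : Finset ℕ) :
    ∃ D, 2 * ∏ i ∈ s, (f i + b) =
      2 * ∏ i ∈ s, f i + 2 * b * (∑ i ∈ s, ∏ j ∈ s.erase i, f j)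
      + b^2 * (∑ i ∈ s, ∑ j ∈ s.erase i, ∏ k ∈ (s.erase i).erase j, f k) + b^3 * D := by
  induction s using Finset.induction_on with
  | empty => exact ⟨0, by simp⟩
  | @insert a s ha ih =>
    obtain ⟨D, hD⟩ := ih
    refine ⟨f a * D + (∑ i ∈ s, ∑ j ∈ s.erase i, ∏ k ∈ (s.erase i).erase j, f k) + b * D, ?_⟩
    have h1 : ∑ i ∈ insert a s, ∏ j ∈ (insert a s).erase i, f j
        = ∏ j ∈ s, f j + f a * ∑ i ∈ s, ∏ j ∈ s.erase i, f j := by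
      rw [Finset.sum_insert ha, Finset.erase_insert ha]
      congr 1
      rw [Finset.mul_sum]
      apply Finset.sum_congr rfl
      intro i hi
      have hai : a ≠ i := fun h => ha (h ▸ hi)
      rw [Finset.erase_insert_of_ne hai, Finset.prod_insert (fun h => ha (Finset.erase_subset _ _ h))]
    have h2 : ∑ i ∈ insert a s, ∑ j ∈ (insert a s).erase i, ∏ k ∈ ((insert a s).erase i).erase j, f k
        = 2 * (∑ i ∈ s, ∏ j ∈ s.erase i, f j)
          + f a * ∑ i ∈ s, ∑ j ∈ s.erase i, ∏ k ∈ (s.erase i).erase j, f k := by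
      rw [Finset.sum_insert ha, Finset.erase_insert ha]
      have inner : ∀ i ∈ s, ∑ j ∈ (insert a s).erase i, ∏ k ∈ ((insert a s).erase i).erase j, f k
          = ∏ k ∈ s.erase i, f k + f a * ∑ j ∈ s.erase i, ∏ k ∈ (s.erase i).erase j, f k := by
        intro i hi
        have hai : a ≠ i := fun h => ha (h ▸ hi)
        have hanotin : a ∉ s.erase i := fun h => ha (Finset.erase_subset _ _ h)
        rw [Finset.erase_insert_of_ne hai, Finset.sum_insert hanotin,
          Finset.erase_insert hanotin]
        congr 1
        rw [Finset.mul_sum]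
        apply Finset.sum_congr rfl
        intro j hj
        have haj : a ≠ j := fun h => ha (h ▸ (Finset.erase_subset _ _ hj))
        rw [Finset.erase_insert_of_ne haj,
          Finset.prod_insert (fun h => ha ((Finset.erase_subset _ _) ((Finset.erase_subset _ _) h)))]
      rw [Finset.sum_congr rfl inner, Finset.sum_add_distrib, ← Finset.mul_sum]
      ring
    rw [Finset.prod_insert ha, Finset.prod_insert ha, h1, h2]
    have : 2 * ((f a + b) * ∏ i ∈ s, (f i + b)) = (f a + b) * (2 * ∏ i ∈ s, (f i + b)) := by ring
    rw [this, hD]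
    ring

lemma key_prod (p : ℕ) (hp : 1 ≤ p) :
    qBinom (2*p) p * qFact (p-1) =
      (1 + X^p) * ∏ i ∈ Finset.range (p-1), (X^p * qInt (i+1) + qInt p) := by
  obtain ⟨m, rfl⟩ : ∃ m, p = m + 1 := ⟨p - 1, by omega⟩
  set p := m + 1 with hpdef
  have h := qBinom_mul_fact (2*p) p (by omega)
  have h2 : 2*p - p = p := by omega
  rw [h2] at h
  have hsplit : qFact (2*p) = qFact p * ∏ i ∈ Finset.range p, (X^p * qInt (i+1) + qInt p) := by
    rw [two_mul, qFact, Finset.prod_range_add, ← qFact]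
    congr 1
    apply Finset.prod_congr rfl
    intro i _
    have : p + i + 1 = p + (i + 1) := by omega
    rw [this, qInt_add]
    ring
  rw [hsplit] at h
  have hA : qBinom (2*p) p * qFact p = ∏ i ∈ Finset.range p, (X^p * qInt (i+1) + qInt p) :=
    mul_left_cancel₀ (qFact_ne_zero p) (by rw [← h]; ring)
  have hlast : ∏ i ∈ Finset.range p, (X^p * qInt (i+1) + qInt p)
      = (∏ i ∈ Finset.range m, (X^p * qInt (i+1) + qInt p)) * (qInt p * (X^p + 1)) := by
    rw [Finset.prod_range_succ]
    ring
  have hfact : qFact p = qFact m * qInt p := qFact_succ m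
  apply mul_right_cancel₀ (qInt_ne_zero (by omega : 0 < p))
  have hm : p - 1 = m := by omega
  rw [hm]
  calc qBinom (2*p) p * qFact m * qInt p = qBinom (2*p) p * qFact p := by rw [hfact]; ring
    _ = (∏ i ∈ Finset.range m, (X^p * qInt (i+1) + qInt p)) * (qInt p * (X^p + 1)) := by
        rw [hA, hlast]
    _ = (1 + X^p) * (∏ i ∈ Finset.range m, (X^p * qInt (i+1) + qInt p)) * qInt p := by ring

lemma X_sub_one_mul_qInt (k : ℕ) : (X - 1) * qInt k = X^k - 1 := by
  rw [qInt, mul_comm]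
  exact geom_sum_mul X k

lemma pairing (p : ℕ) (hodd : p % 2 = 1) (hge : 3 ≤ p) :
    ((p : Polynomial ℤ) - 1) * (X - 1) * (∏ i ∈ Finset.range (p-1), qInt (i+1))
      + 2 * (∑ i ∈ Finset.range (p-1), ∏ j ∈ (Finset.range (p-1)).erase i, qInt (j+1))
    = qInt p * (∑ i ∈ Finset.range (p-1),
        ∏ k ∈ ((Finset.range (p-1)).erase i).erase (p-2-i), qInt (k+1)) := by
  set s := Finset.range (p-1) with hs
  set g : ℕ → Polynomial ℤ := fun i => qInt (i+1) with hg
  set M := ∏ i ∈ s, g i with hM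
  have key : ∀ i ∈ s,
      (∏ j ∈ s.erase i, g j) + (∏ j ∈ s.erase (p-2-i), g j)
      = qInt p * (∏ k ∈ (s.erase i).erase (p-2-i), g k) - (X - 1) * M := by
    intro i hi
    have hilt : i < p - 1 := Finset.mem_range.mp hi
    have hne : p - 2 - i ≠ i := by omega
    have hmem : p - 2 - i ∈ s := Finset.mem_range.mpr (by omega)
    have hmem' : p - 2 - i ∈ s.erase i := Finset.mem_erase.mpr ⟨hne, hmem⟩
    have hmem'' : i ∈ s.erase (p-2-i) := Finset.mem_erase.mpr ⟨hne.symm, hi⟩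
    have e1 : (∏ j ∈ s.erase i, g j)
        = (∏ k ∈ (s.erase i).erase (p-2-i), g k) * g (p-2-i) :=
      (Finset.prod_erase_mul _ _ hmem').symm
    have e2 : (∏ j ∈ s.erase (p-2-i), g j)
        = (∏ k ∈ (s.erase i).erase (p-2-i), g k) * g i := by
      rw [Finset.erase_right_comm]
      exact (Finset.prod_erase_mul _ _ hmem'').symm
    have e3 : M = (∏ k ∈ (s.erase i).erase (p-2-i), g k) * g (p-2-i) * g i := by
      rw [← e1]
      exact (Finset.prod_erase_mul _ _ hi).symm
    have hqi : g i + g (p-2-i) = qInt p - (X-1) * (g i * g (p-2-i)) := by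
      have hadd : (i+1) + (p-2-i+1) = p := by omega
      have := qInt_add (i+1) (p-2-i+1)
      rw [hadd] at this
      have hx : X^(i+1) * qInt (p-2-i+1) - qInt (p-2-i+1)
          = (X-1) * qInt (i+1) * qInt (p-2-i+1) := by
        rw [X_sub_one_mul_qInt]
        ring
      simp only [hg]
      rw [this]
      linear_combination -hx
    rw [e1, e2, e3]
    linear_combination (∏ k ∈ (s.erase i).erase (p-2-i), g k) * hqi
  have reflect : (∑ i ∈ s, ∏ j ∈ s.erase i, g j)
      = ∑ i ∈ s, ∏ j ∈ s.erase (p-2-i), g j := by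
    rw [hs]
    exact (Finset.sum_range_reflect (fun i => ∏ j ∈ (Finset.range (p-1)).erase i, g j) (p-1)).symm
  have h2 : 2 * (∑ i ∈ s, ∏ j ∈ s.erase i, g j)
      = ∑ i ∈ s, ((∏ j ∈ s.erase i, g j) + (∏ j ∈ s.erase (p-2-i), g j)) := by
    rw [Finset.sum_add_distrib, ← reflect]
    ring
  rw [h2, Finset.sum_congr rfl key, Finset.sum_sub_distrib, ← Finset.mul_sum,
    Finset.sum_const, hs, Finset.card_range]
  have : ((p:ℕ) - 1 : ℕ) • ((X - 1) * M) = ((p:Polynomial ℤ) - 1) * ((X-1) * M) := by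
    rw [nsmul_eq_mul]
    congr 1
    push_cast [Nat.cast_sub (by omega : 1 ≤ p)]
    ring
  rw [this]
  ring

lemma sum_cast_mul_pred (n : ℕ) :
    (∑ k ∈ Finset.range n, (k:ℂ)*((k-1:ℕ):ℂ)) * 3 = (n:ℂ)*((n:ℂ)-1)*((n:ℂ)-2) := by
  induction n with
  | zero => simp
  | succ n ih =>
    rw [Finset.sum_range_succ, add_mul, ih]
    cases n with
    | zero => norm_num
    | succ m =>
      have : (m + 1 - 1 : ℕ) = m := by omega
      rw [this]
      push_cast
      ring


lemma roots_facts (p : ℕ) (hp : p.Prime) (hp5' : 5 ≤ p) :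
    ∃ z : ℂ, IsPrimitiveRoot z p ∧
      (∏ i ∈ Finset.range (p-1), (X - C (z^(i+1))) : ℂ[X]) = ∑ k ∈ Finset.range p, (X:ℂ[X])^k := by
  have hp0 : p ≠ 0 := by omega
  clear hp5'
  refine ⟨Complex.exp (2 * Real.pi * Complex.I / p), Complex.isPrimitiveRoot_exp p hp0, ?_⟩
  set z := Complex.exp (2 * Real.pi * Complex.I / p) with hzdef
  have hz : IsPrimitiveRoot z p := Complex.isPrimitiveRoot_exp p hp0
  have hppos : 0 < p := by omega
  have hinj : Set.InjOn (fun i => z^i) (Finset.range p) := by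
    intro a ha b hb hab
    exact hz.pow_inj (Finset.mem_range.mp ha) (Finset.mem_range.mp hb) hab
  have himg : (Finset.range p).image (fun i => z^i) = Polynomial.nthRootsFinset p (1 : ℂ) := by
    apply Finset.eq_of_subset_of_card_le
    · intro x hx
      obtain ⟨i, _, rfl⟩ := Finset.mem_image.mp hx
      rw [Polynomial.mem_nthRootsFinset hppos]
      rw [← pow_mul, mul_comm, pow_mul, hz.pow_eq_one, one_pow]
    · rw [hz.card_nthRootsFinset, Finset.card_image_of_injOn hinj, Finset.card_range]
  have hfull : (∏ i ∈ Finset.range p, (X - C (z^i)) : ℂ[X]) = X^p - 1 := by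
    rw [X_pow_sub_one_eq_prod hppos hz, ← himg, Finset.prod_image hinj]
  have hgeom : ((∑ k ∈ Finset.range p, (X:ℂ[X])^k)) * (X - 1) = X^p - 1 := geom_sum_mul _ _
  have hstep : (∏ i ∈ Finset.range p, (X - C (z^i)) : ℂ[X])
      = (∏ i ∈ Finset.range (p-1), (X - C (z^(i+1)))) * (X - 1) := by
    obtain ⟨m, rfl⟩ : ∃ m, p = m + 1 := ⟨p - 1, by omega⟩
    rw [Finset.prod_range_succ']
    simp
  have hX1 : (X - 1 : ℂ[X]) ≠ 0 := by
    have := Polynomial.X_sub_C_ne_zero (1 : ℂ)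
    simpa using this
  apply mul_right_cancel₀ hX1
  rw [← hstep, hfull, hgeom]

lemma derivative_finset_prod {R : Type*} [CommSemiring R] (s : Finset ℕ) (f : ℕ → R[X]) :
    derivative (∏ i ∈ s, f i) = ∑ i ∈ s, (∏ j ∈ s.erase i, f j) * derivative (f i) := by
  induction s using Finset.induction_on with
  | empty => simp
  | @insert a s ha ih =>
    rw [Finset.prod_insert ha, derivative_mul, ih, Finset.sum_insert ha, Finset.erase_insert ha]
    rw [Finset.mul_sum]
    congr 1
    · ring
    · apply Finset.sum_congr rfl
      intro i hi
      have hai : a ≠ i := fun h => ha (h ▸ hi)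
      rw [Finset.erase_insert_of_ne hai,
        Finset.prod_insert (fun h => ha (Finset.erase_subset _ _ h))]
      ring

set_option maxHeartbeats 2000000 in
lemma aeval_main (p : ℕ) (hp : p.Prime) (hp5 : 5 ≤ p) (z : ℂ) (hz : IsPrimitiveRoot z p)
    (hPQ : (∏ i ∈ Finset.range (p-1), (X - C (z^(i+1))) : ℂ[X]) = ∑ k ∈ Finset.range p, (X:ℂ[X])^k)
    (c1 c : ℤ)
    (hc1 : (c1:ℂ) * 2 = ((p:ℂ)-1)*((p:ℂ)-2))
    (hcc : (c:ℂ) * 12 = (p:ℂ)^2 - 1) :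
    (aeval z) ((∑ i ∈ Finset.range (p-1),
          ∏ k ∈ ((Finset.range (p-1)).erase i).erase (p-2-i), qInt (k+1))
      + (C c1 + C c) *
          ((X-1)^2 * ∏ i ∈ Finset.range (p-1), qInt (i+1))
      + C (2*(p:ℤ)-3) *
          ((X-1) * ∑ i ∈ Finset.range (p-1), ∏ j ∈ (Finset.range (p-1)).erase i, qInt (j+1))
      + ∑ i ∈ Finset.range (p-1), ∑ j ∈ (Finset.range (p-1)).erase i,
          ∏ k ∈ ((Finset.range (p-1)).erase i).erase j, qInt (k+1)) = 0 := by
  have hppos : 0 < p := by omega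
  set s := Finset.range (p-1) with hs
  set d := 1 - z with hd
  set P := (p:ℂ) with hP
  -- basic nonvanishing
  have hzne1 : z ≠ 1 := hz.ne_one (by omega)
  have hdne : d ≠ 0 := sub_ne_zero_of_ne (Ne.symm hzne1)
  have hPne : P ≠ 0 := by
    simp only [hP, Ne, Nat.cast_eq_zero]
    omega
  have hu : ∀ i ∈ s, (1 - z^(i+1)) ≠ 0 := by
    intro i hi
    have : i + 1 < p := by have := Finset.mem_range.mp hi; omega
    exact sub_ne_zero_of_ne (Ne.symm (hz.pow_ne_one_of_pos_of_lt (by omega) this))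
  -- aeval of qInt
  have haq : ∀ k : ℕ, aeval z (qInt k) = (1 - z^k) / d := by
    intro k
    have h0 := congrArg (aeval z) (X_sub_one_mul_qInt k)
    simp only [map_mul, map_sub, aeval_X, map_one, map_pow] at h0
    rw [eq_div_iff hdne]
    rw [hd]
    linear_combination -h0
  -- product of (1 - z^(i+1)) = p
  have hprod : ∏ i ∈ s, (1 - z^(i+1)) = P := by
    have := congrArg (eval 1) hPQ
    simpa [eval_prod, eval_finset_sum] using this
  -- first derivative
  have hL1 : derivative (∏ i ∈ s, (X - C (z^(i+1))) : ℂ[X])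
      = ∑ i ∈ s, ∏ j ∈ s.erase i, (X - C (z^(j+1))) := by
    rw [derivative_finset_prod]
    simp only [derivative_sub, derivative_X, derivative_C, sub_zero, mul_one]
  have hR1 : derivative (∑ k ∈ Finset.range p, (X:ℂ[X])^k)
      = ∑ k ∈ Finset.range p, C (k:ℂ) * X^(k-1) := by
    rw [derivative_sum]
    simp [derivative_X_pow]
  have hder1 : (∑ i ∈ s, ∏ j ∈ s.erase i, (X - C (z^(j+1))) : ℂ[X])
      = ∑ k ∈ Finset.range p, C (k:ℂ) * X^(k-1) := by
    rw [← hL1, ← hR1, hPQ]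
  have hD1 : (∑ i ∈ s, ∏ j ∈ s.erase i, (1 - z^(j+1))) = ∑ k ∈ Finset.range p, (k:ℂ) := by
    have := congrArg (eval 1) hder1
    simpa [eval_finset_sum, eval_prod] using this
  -- second derivative
  have hL2 : derivative (∑ i ∈ s, ∏ j ∈ s.erase i, (X - C (z^(j+1))) : ℂ[X])
      = ∑ i ∈ s, ∑ j ∈ s.erase i, ∏ k ∈ (s.erase i).erase j, (X - C (z^(k+1))) := by
    rw [derivative_sum]
    apply Finset.sum_congr rfl
    intro i _
    rw [derivative_finset_prod]
    simp only [derivative_sub, derivative_X, derivative_C, sub_zero, mul_one]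
  have hR2 : derivative (∑ k ∈ Finset.range p, C (k:ℂ) * X^(k-1))
      = ∑ k ∈ Finset.range p, C (k:ℂ) * (C ((k-1:ℕ):ℂ) * X^(k-1-1)) := by
    rw [derivative_sum]
    simp [derivative_X_pow]
  have hder2 : (∑ i ∈ s, ∑ j ∈ s.erase i, ∏ k ∈ (s.erase i).erase j, (X - C (z^(k+1))) : ℂ[X])
      = ∑ k ∈ Finset.range p, C (k:ℂ) * (C ((k-1:ℕ):ℂ) * X^(k-1-1)) := by
    rw [← hL2, ← hR2, hder1]
  have hD2 : (∑ i ∈ s, ∑ j ∈ s.erase i, ∏ k ∈ (s.erase i).erase j, (1 - z^(k+1)))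
      = ∑ k ∈ Finset.range p, (k:ℂ) * ((k-1:ℕ):ℂ) := by
    have := congrArg (eval 1) hder2
    simpa [eval_finset_sum, eval_prod] using this
  -- numeric sums
  have hsum1 : ∑ k ∈ Finset.range p, (k:ℂ) = P*(P-1)/2 := by
    have h := Finset.sum_range_id_mul_two p
    have hc := congrArg (fun n : ℕ => (n:ℂ)) h
    push_cast [Nat.cast_sub (by omega : 1 ≤ p)] at hc
    rw [eq_div_iff (two_ne_zero)]
    exact hc
  have hsum2 : ∑ k ∈ Finset.range p, (k:ℂ) * ((k-1:ℕ):ℂ) = P*(P-1)*(P-2)/3 := by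
    have h := sum_cast_mul_pred p
    rw [eq_div_iff (three_ne_zero)]
    exact h
  -- sigma definitions
  set σ := ∑ i ∈ s, (1 - z^(i+1))⁻¹ with hσdef
  set σ₂ := ∑ i ∈ s, ((1 - z^(i+1))⁻¹)^2 with hσ2def
  have herase : ∀ i ∈ s, ∏ j ∈ s.erase i, (1 - z^(j+1)) = P * (1 - z^(i+1))⁻¹ := by
    intro i hi
    have h := Finset.prod_erase_mul s (fun j => 1 - z^(j+1)) hi
    rw [hprod] at h
    field_simp [hu i hi]
    linear_combination h
  have herase2 : ∀ i ∈ s, ∀ j ∈ s.erase i,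
      ∏ k ∈ (s.erase i).erase j, (1 - z^(k+1)) = P * (1 - z^(i+1))⁻¹ * (1 - z^(j+1))⁻¹ := by
    intro i hi j hj
    have h := Finset.prod_erase_mul (s.erase i) (fun k => 1 - z^(k+1)) hj
    rw [herase i hi] at h
    have huj := hu j (Finset.mem_of_mem_erase hj)
    rw [eq_mul_inv_iff_mul_eq₀ huj]
    exact h
  have hinner : ∀ i ∈ s, ∑ j ∈ s.erase i, (1 - z^(j+1))⁻¹ = σ - (1 - z^(i+1))⁻¹ := by
    intro i hi
    rw [eq_sub_iff_add_eq]
    exact Finset.sum_erase_add s _ hi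
  -- sigma values
  have hσval : σ = (P-1)/2 := by
    have h1 : P * σ = P * ((P-1)/2) := by
      calc P * σ = ∑ i ∈ s, P * (1 - z^(i+1))⁻¹ := by rw [Finset.mul_sum]
        _ = ∑ i ∈ s, ∏ j ∈ s.erase i, (1 - z^(j+1)) := by
            exact (Finset.sum_congr rfl herase).symm
        _ = ∑ k ∈ Finset.range p, (k:ℂ) := hD1
        _ = P*(P-1)/2 := hsum1
        _ = P * ((P-1)/2) := by ring
    exact mul_left_cancel₀ hPne h1
  have hσ2val : σ₂ = σ^2 - (P-1)*(P-2)/3 := by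
    have h1 : P * (σ^2 - σ₂) = P * ((P-1)*(P-2)/3) := by
      calc P * (σ^2 - σ₂)
          = ∑ i ∈ s, (P * (1 - z^(i+1))⁻¹ * (σ - (1 - z^(i+1))⁻¹)) := by
            have expand : ∀ i ∈ s, P * (1 - z^(i+1))⁻¹ * (σ - (1 - z^(i+1))⁻¹)
                = P*σ*(1 - z^(i+1))⁻¹ - P*((1 - z^(i+1))⁻¹)^2 := by
              intro i _
              ring
            rw [Finset.sum_congr rfl expand, Finset.sum_sub_distrib, ← Finset.mul_sum,
              ← Finset.mul_sum, ← hσdef, ← hσ2def]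
            ring
        _ = ∑ i ∈ s, ∑ j ∈ s.erase i, ∏ k ∈ (s.erase i).erase j, (1 - z^(k+1)) := by
            apply Finset.sum_congr rfl
            intro i hi
            rw [Finset.sum_congr rfl (herase2 i hi), ← Finset.mul_sum, hinner i hi]
        _ = ∑ k ∈ Finset.range p, (k:ℂ) * ((k-1:ℕ):ℂ) := hD2
        _ = P*(P-1)*(P-2)/3 := hsum2
        _ = P * ((P-1)*(P-2)/3) := by ring
    have := mul_left_cancel₀ hPne h1
    linear_combination -this
  have podd : p % 2 = 1 := by
    rcases hp.eq_two_or_odd with h | h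
    · omega
    · exact h
  have hcard : s.card = p - 1 := Finset.card_range _
  have halg : ∑ i ∈ s, (P * (1 - z^(i+1))⁻¹ * (σ - (1 - z^(i+1))⁻¹)) = P * (σ^2 - σ₂) := by
    have expand : ∀ i ∈ s, P * (1 - z^(i+1))⁻¹ * (σ - (1 - z^(i+1))⁻¹)
        = P*σ*(1 - z^(i+1))⁻¹ - P*((1 - z^(i+1))⁻¹)^2 := by
      intro i _
      ring
    rw [Finset.sum_congr rfl expand, Finset.sum_sub_distrib, ← Finset.mul_sum,
      ← Finset.mul_sum, ← hσdef, ← hσ2def]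
    ring
  have hMe : aeval z (∏ i ∈ Finset.range (p-1), qInt (i+1)) = P / d^(p-1) := by
    rw [map_prod, Finset.prod_congr rfl (fun i _ => haq (i+1)), Finset.prod_div_distrib,
      Finset.prod_const, Finset.card_range, hprod]
  have hS1e : aeval z (∑ i ∈ Finset.range (p-1), ∏ j ∈ (Finset.range (p-1)).erase i, qInt (j+1))
      = P * σ / d^(p-2) := by
    rw [map_sum]
    have per : ∀ i ∈ s, aeval z (∏ j ∈ s.erase i, qInt (j+1))
        = (P * (1 - z^(i+1))⁻¹) / d^(p-2) := by
      intro i hi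
      rw [map_prod, Finset.prod_congr rfl (fun j _ => haq (j+1)), Finset.prod_div_distrib,
        Finset.prod_const, Finset.card_erase_of_mem hi, hcard, herase i hi]
      norm_num [Nat.sub_sub]
    rw [Finset.sum_congr rfl per, ← Finset.sum_div, ← Finset.mul_sum, ← hσdef]
  have hPre : aeval z (∑ i ∈ Finset.range (p-1), ∑ j ∈ (Finset.range (p-1)).erase i,
        ∏ k ∈ ((Finset.range (p-1)).erase i).erase j, qInt (k+1))
      = P * (σ^2 - σ₂) / d^(p-3) := by
    rw [map_sum]
    have per : ∀ i ∈ s, aeval z (∑ j ∈ s.erase i, ∏ k ∈ (s.erase i).erase j, qInt (k+1))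
        = (P * (1 - z^(i+1))⁻¹ * (σ - (1 - z^(i+1))⁻¹)) / d^(p-3) := by
      intro i hi
      rw [map_sum]
      have per2 : ∀ j ∈ s.erase i, aeval z (∏ k ∈ (s.erase i).erase j, qInt (k+1))
          = (P * (1 - z^(i+1))⁻¹ * (1 - z^(j+1))⁻¹)/d^(p-3) := by
        intro j hj
        rw [map_prod, Finset.prod_congr rfl (fun k _ => haq (k+1)), Finset.prod_div_distrib,
          Finset.prod_const, Finset.card_erase_of_mem hj, Finset.card_erase_of_mem hi, hcard,
          herase2 i hi j hj]
        norm_num [Nat.sub_sub]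
      rw [Finset.sum_congr rfl per2, ← Finset.sum_div, ← Finset.mul_sum, hinner i hi]
    rw [Finset.sum_congr rfl per, ← Finset.sum_div, halg]
  have hTe : aeval z (∑ i ∈ Finset.range (p-1),
        ∏ k ∈ ((Finset.range (p-1)).erase i).erase (p-2-i), qInt (k+1))
      = P * (σ - σ₂) / d^(p-3) := by
    rw [map_sum]
    have per : ∀ i ∈ s, aeval z (∏ k ∈ (s.erase i).erase (p-2-i), qInt (k+1))
        = (P * ((1 - z^(i+1))⁻¹ - ((1 - z^(i+1))⁻¹)^2))/d^(p-3) := by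
      intro i hi
      have hilt : i < p-1 := Finset.mem_range.mp hi
      have hne : p-2-i ≠ i := by omega
      have hmem' : p-2-i ∈ s.erase i :=
        Finset.mem_erase.mpr ⟨hne, Finset.mem_range.mpr (by omega)⟩
      rw [map_prod, Finset.prod_congr rfl (fun k _ => haq (k+1)), Finset.prod_div_distrib,
        Finset.prod_const, Finset.card_erase_of_mem hmem', Finset.card_erase_of_mem hi, hcard,
        herase2 i hi _ hmem']
      have hidx : p-2-i+1 = p-1-i := by omega
      rw [hidx]
      have hzz : z^(i+1) * z^(p-1-i) = 1 := by
        rw [← pow_add]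
        have harg : i+1 + (p-1-i) = p := by omega
        rw [harg, hz.pow_eq_one]
      have hu1 : (1 - z^(i+1)) ≠ 0 := hu i hi
      have hu2 : (1 - z^(p-1-i)) ≠ 0 := by
        apply sub_ne_zero_of_ne
        apply Ne.symm
        exact hz.pow_ne_one_of_pos_of_lt (by omega) (by omega)
      have hterm : (1 - z^(i+1))⁻¹ * (1 - z^(p-1-i))⁻¹
          = (1 - z^(i+1))⁻¹ - ((1 - z^(i+1))⁻¹)^2 := by
        field_simp
        linear_combination -hzz
      rw [mul_assoc, hterm]
      norm_num [Nat.sub_sub]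
    rw [Finset.sum_congr rfl per, ← Finset.sum_div, ← Finset.mul_sum, Finset.sum_sub_distrib,
      ← hσdef, ← hσ2def]
  -- final assembly
  have hc1' : (c1:ℂ) = (P-1)*(P-2)/2 := by
    rw [eq_div_iff (two_ne_zero)]
    exact hc1
  have hcc' : (c:ℂ) = (P^2-1)/12 := by
    rw [eq_div_iff (by norm_num : (12:ℂ) ≠ 0)]
    exact hcc
  have hCc : aeval z (C c1 + C c : Polynomial ℤ) = (c1:ℂ) + (c:ℂ) := by
    simp
  have hC3 : aeval z (C (2*(p:ℤ)-3) : Polynomial ℤ) = 2*P - 3 := by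
    rw [aeval_C, algebraMap_int_eq, eq_intCast]
    push_cast
    ring
  have hx1 : aeval z (((X:Polynomial ℤ)-1)^2 * (∏ i ∈ Finset.range (p-1), qInt (i+1)))
      = (z-1)^2 * (P / d^(p-1)) := by
    rw [map_mul, map_pow, map_sub, aeval_X, map_one, hMe]
  have hx2 : aeval z (((X:Polynomial ℤ)-1) * ∑ i ∈ Finset.range (p-1),
        ∏ j ∈ (Finset.range (p-1)).erase i, qInt (j+1))
      = (z-1) * (P * σ / d^(p-2)) := by
    rw [map_mul, map_sub, aeval_X, map_one, hS1e]
  have hy1 : aeval z ((C c1 + C c) * (((X:Polynomial ℤ)-1)^2 * ∏ i ∈ Finset.range (p-1), qInt (i+1)))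
      = ((c1:ℂ) + (c:ℂ)) * ((z-1)^2 * (P / d^(p-1))) := by
    rw [map_mul, hCc, hx1]
  have hy2 : aeval z (C (2*(p:ℤ)-3) * (((X:Polynomial ℤ)-1) * ∑ i ∈ Finset.range (p-1),
        ∏ j ∈ (Finset.range (p-1)).erase i, qInt (j+1)))
      = (2*P-3) * ((z-1) * (P * σ / d^(p-2))) := by
    rw [map_mul, hC3, hx2]
  rw [map_add, map_add, map_add, hTe, hy1, hy2, hPre]
  have hz1 : z - 1 = -d := by rw [hd]; ring
  have hexp1 : p - 1 = (p-3) + 2 := by omega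
  have hexp2 : p - 2 = (p-3) + 1 := by omega
  rw [hz1, hexp1, hexp2, pow_add, pow_add, pow_one]
  have hdp : d^(p-3) ≠ 0 := pow_ne_zero _ hdne
  have hBzero : (σ - σ₂) + ((c1:ℂ)+(c:ℂ)) + (-((2*P-3)*σ)) + (σ^2 - σ₂) = 0 := by
    rw [hσ2val, hσval, hc1', hcc']
    ring
  have t2 : ((c1:ℂ) + (c:ℂ)) * ((-d)^2 * (P/(d^(p-3) * d^2)))
      = P/d^(p-3) * ((c1:ℂ) + (c:ℂ)) := by
    field_simp
  have t3 : (2*P-3) * ((-d) * (P * σ/(d^(p-3) * d)))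
      = P/d^(p-3) * (-((2*P-3)*σ)) := by
    field_simp
  rw [t2, t3]
  linear_combination (P / d^(p-3)) * hBzero

lemma twelve_dvd_sq_sub_one {p : ℕ} (hp : p.Prime) (hp5 : 5 ≤ p) :
    ((p:ℤ)^2 - 1) / 12 * 12 = (p:ℤ)^2 - 1 := by
  have h2 : ¬ (2 ∣ p) := by
    intro h
    have := (Nat.prime_dvd_prime_iff_eq Nat.prime_two hp).mp h
    omega
  have h3 : ¬ (3 ∣ p) := by
    intro h
    have := (Nat.prime_dvd_prime_iff_eq Nat.prime_three hp).mp h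
    omega
  have h6 : p % 6 = 1 ∨ p % 6 = 5 := by omega
  have hdvd : (12:ℤ) ∣ (p:ℤ)^2 - 1 := by
    rcases h6 with h | h
    · obtain ⟨k, hk⟩ : ∃ k, p = 6*k + 1 := ⟨p/6, by omega⟩
      refine ⟨3*k^2 + k, ?_⟩
      subst hk; push_cast; ring
    · obtain ⟨k, hk⟩ : ∃ k, p = 6*k + 5 := ⟨p/6, by omega⟩
      refine ⟨3*k^2 + 5*k + 2, ?_⟩
      subst hk; push_cast; ring
  exact Int.ediv_mul_cancel hdvd

lemma field_dvd (p : ℕ) (hp : p.Prime) (hp5 : 5 ≤ p) :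
    qInt p ∣
      (∑ i ∈ Finset.range (p-1),
          ∏ k ∈ ((Finset.range (p-1)).erase i).erase (p-2-i), qInt (k+1))
      + (C ((((p-1).choose 2 : ℕ)) : ℤ) + C (((p:ℤ)^2-1)/12)) *
          ((X-1)^2 * ∏ i ∈ Finset.range (p-1), qInt (i+1))
      + C (2*(p:ℤ)-3) *
          ((X-1) * ∑ i ∈ Finset.range (p-1), ∏ j ∈ (Finset.range (p-1)).erase i, qInt (j+1))
      + ∑ i ∈ Finset.range (p-1), ∑ j ∈ (Finset.range (p-1)).erase i,
          ∏ k ∈ ((Finset.range (p-1)).erase i).erase j, qInt (k+1) := by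
  haveI := Fact.mk hp
  have hppos : 0 < p := by omega
  obtain ⟨z, hz, hPQ⟩ := roots_facts p hp hp5
  have hcyc : qInt p = cyclotomic p ℤ := by rw [cyclotomic_prime]; rfl
  set W := (∑ i ∈ Finset.range (p-1),
          ∏ k ∈ ((Finset.range (p-1)).erase i).erase (p-2-i), qInt (k+1))
      + (C ((((p-1).choose 2 : ℕ)) : ℤ) + C (((p:ℤ)^2-1)/12)) *
          ((X-1)^2 * ∏ i ∈ Finset.range (p-1), qInt (i+1))
      + C (2*(p:ℤ)-3) *
          ((X-1) * ∑ i ∈ Finset.range (p-1), ∏ j ∈ (Finset.range (p-1)).erase i, qInt (j+1))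
      + ∑ i ∈ Finset.range (p-1), ∑ j ∈ (Finset.range (p-1)).erase i,
          ∏ k ∈ ((Finset.range (p-1)).erase i).erase j, qInt (k+1) with hW
  rw [hcyc]
  rw [← Polynomial.map_dvd_map (Int.castRingHom ℚ) Int.cast_injective (cyclotomic.monic p ℤ)]
  rw [Polynomial.map_cyclotomic]
  rw [cyclotomic_eq_minpoly_rat hz hppos]
  apply minpoly.dvd
  have hmap : aeval z (W.map (Int.castRingHom ℚ)) = aeval z W := by
    rw [show (Int.castRingHom ℚ) = algebraMap ℤ ℚ from rfl, aeval_map_algebraMap]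
  rw [hmap]
  have hch : ((p-1).choose 2) * 2 = (p-1) * (p-2) := by
    rw [Nat.choose_two_right, Nat.sub_sub]
    have heven : Even ((p-2) * (p-2+1)) := Nat.even_mul_succ_self _
    obtain ⟨r, hr⟩ := heven
    have hcomm : (p-1)*(p-(1+1)) = (p-2)*(p-2+1) := by
      rw [mul_comm]
      congr 1 <;> omega
    rw [hcomm]
    omega
  have hc1 : (((((p-1).choose 2 : ℕ)) : ℤ) : ℂ) * 2 = ((p:ℂ)-1)*((p:ℂ)-2) := by
    have h2 := congrArg (fun n : ℕ => (n:ℂ)) hch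
    push_cast [Nat.cast_sub (show 1 ≤ p by omega), Nat.cast_sub (show 2 ≤ p by omega)] at h2 ⊢
    linear_combination h2
  have hcc : ((((p:ℤ)^2-1)/12 : ℤ) : ℂ) * 12 = (p:ℂ)^2 - 1 := by
    have h := twelve_dvd_sq_sub_one hp hp5
    have h2 := congrArg (fun n : ℤ => (n:ℂ)) h
    push_cast at h2 ⊢
    linear_combination h2
  exact aeval_main p hp hp5 z hz hPQ _ _ hc1 hcc


set_option maxHeartbeats 4000000 in
theorem q_wolstenholme (p : ℕ) (hp : p.Prime) (hp5 : 5 ≤ p) :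
    (qInt p) ^ 3 ∣
      qBinom (2 * p) p -
        (1 + X ^ (p ^ 2) - C (((p : ℤ) ^ 2 - 1) / 12) * (X ^ p - 1) ^ 2) := by
  haveI := Fact.mk hp
  have hppos : 0 < p := by omega
  have podd : p % 2 = 1 := by
    rcases hp.eq_two_or_odd with h | h
    · omega
    · exact h
  have hcyc : qInt p = cyclotomic p ℤ := by rw [cyclotomic_prime]; rfl
  have hprime : Prime (qInt p) := by
    rw [hcyc]
    exact (UniqueFactorizationMonoid.irreducible_iff_prime).mp (cyclotomic.irreducible hppos)
  have hdegΦ : (qInt p).natDegree = p - 1 := by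
    rw [hcyc, natDegree_cyclotomic, Nat.totient_prime hp]
  have hqdegle : ∀ k : ℕ, (qInt k).natDegree ≤ k - 1 := by
    intro k
    rw [qInt]
    apply Polynomial.natDegree_sum_le_of_forall_le
    intro i hi
    rw [natDegree_X_pow]
    have := Finset.mem_range.mp hi
    omega
  have hnot2 : ¬ qInt p ∣ 2 := by
    intro h
    have h2 : (2 : Polynomial ℤ) ≠ 0 := by norm_num
    have hle := Polynomial.natDegree_le_of_dvd h h2
    have hdeg2 : (2 : Polynomial ℤ).natDegree = 0 := by simp
    rw [hdegΦ, hdeg2] at hle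
    omega
  have hnotM : ¬ qInt p ∣ ∏ i ∈ Finset.range (p-1), qInt (i+1) := by
    intro h
    obtain ⟨i, hi, hdvd⟩ := hprime.exists_mem_finset_dvd h
    have hne := qInt_ne_zero (Nat.succ_pos i)
    have hle := Polynomial.natDegree_le_of_dvd hdvd hne
    have h2 := hqdegle (i+1)
    rw [hdegΦ] at hle
    have := Finset.mem_range.mp hi
    omega
  suffices hsuff : qInt p ^ 3 ∣ 2 * ((∏ i ∈ Finset.range (p-1), qInt (i+1)) *
      (qBinom (2*p) p - (1 + X ^ (p ^ 2) - C (((p : ℤ) ^ 2 - 1) / 12) * (X ^ p - 1) ^ 2))) by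
    exact hprime.pow_dvd_of_dvd_mul_left 3 hnotM
      (hprime.pow_dvd_of_dvd_mul_left 3 hnot2 hsuff)
  have hkey := key_prod p (by omega)
  obtain ⟨D, hD⟩ := prod_add_sq (qInt p) (fun i => X^p * qInt (i+1)) (Finset.range (p-1))
  have hprodf : ∏ i ∈ Finset.range (p-1), (X^p * qInt (i+1))
      = ((X:Polynomial ℤ)^p)^(p-1) * ∏ i ∈ Finset.range (p-1), qInt (i+1) := by
    rw [Finset.prod_mul_distrib, Finset.prod_const, Finset.card_range]
  have hsumf : (∑ i ∈ Finset.range (p-1), ∏ j ∈ (Finset.range (p-1)).erase i, (X^p * qInt (j+1)))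
      = ((X:Polynomial ℤ)^p)^(p-2) *
        ∑ i ∈ Finset.range (p-1), ∏ j ∈ (Finset.range (p-1)).erase i, qInt (j+1) := by
    rw [Finset.mul_sum]
    apply Finset.sum_congr rfl
    intro i hi
    rw [Finset.prod_mul_distrib, Finset.prod_const, Finset.card_erase_of_mem hi,
      Finset.card_range]
    congr 2
    all_goals omega
  have hpairf : (∑ i ∈ Finset.range (p-1), ∑ j ∈ (Finset.range (p-1)).erase i,
        ∏ k ∈ ((Finset.range (p-1)).erase i).erase j, (X^p * qInt (k+1)))
      = ((X:Polynomial ℤ)^p)^(p-3) *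
        ∑ i ∈ Finset.range (p-1), ∑ j ∈ (Finset.range (p-1)).erase i,
          ∏ k ∈ ((Finset.range (p-1)).erase i).erase j, qInt (k+1) := by
    rw [Finset.mul_sum]
    apply Finset.sum_congr rfl
    intro i hi
    rw [Finset.mul_sum]
    apply Finset.sum_congr rfl
    intro j hj
    rw [Finset.prod_mul_distrib, Finset.prod_const, Finset.card_erase_of_mem hj,
      Finset.card_erase_of_mem hi, Finset.card_range]
    congr 2
    all_goals omega
  rw [hprodf, hsumf, hpairf] at hD
  set w : Polynomial ℤ := (X - 1) * qInt p with hwdef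
  have hXp : (X:Polynomial ℤ)^p = 1 + w := by
    rw [hwdef]
    linear_combination -(X_sub_one_mul_qInt p)
  have hXpsq : (X:Polynomial ℤ)^(p^2) = ((1:Polynomial ℤ)+w)^p := by
    rw [pow_two, pow_mul, hXp]
  obtain ⟨r1, hb1⟩ := one_add_pow w (p-1)
  obtain ⟨r2, hb2⟩ := one_add_pow w (p-2)
  obtain ⟨r3, hb3⟩ := one_add_pow w (p-3)
  obtain ⟨r4, hb4⟩ := one_add_pow w p
  have hA1 : ((p-1:ℕ) : Polynomial ℤ) = (p:Polynomial ℤ) - 1 := by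
    push_cast [Nat.cast_sub (show 1 ≤ p by omega)]
    try ring
  have hA2 : ((p-2:ℕ) : Polynomial ℤ) = (p:Polynomial ℤ) - 2 := by
    push_cast [Nat.cast_sub (show 2 ≤ p by omega)]
    try ring
  rw [hA1] at hb1
  rw [hA2] at hb2
  have hC4 : ((p.choose 2 : ℕ) : Polynomial ℤ)
      = (((p-1).choose 2 : ℕ) : Polynomial ℤ) + (p:Polynomial ℤ) - 1 := by
    have h : p.choose 2 = (p-1).choose 2 + (p-1) := by
      have h2 : ((p-1)+1).choose 2 = (p-1).choose 1 + (p-1).choose 2 := Nat.choose_succ_succ _ 1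
      rw [show p-1+1 = p from by omega, Nat.choose_one_right] at h2
      omega
    rw [h]
    push_cast [Nat.cast_sub (show 1 ≤ p by omega)]
    ring
  rw [hC4] at hb4
  obtain ⟨V, hE2⟩ := field_dvd p hp hp5
  rw [show (C ((((p-1).choose 2 : ℕ)) : ℤ) : Polynomial ℤ)
      = (((p-1).choose 2 : ℕ) : Polynomial ℤ) from by simp [Polynomial.C_eq_natCast]] at hE2
  rw [show (C (2*(p:ℤ)-3) : Polynomial ℤ) = 2*(p:Polynomial ℤ) - 3 from by
    simp only [map_sub, map_mul, map_ofNat, Polynomial.C_eq_natCast]] at hE2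
  have hE1 := pairing p podd (by omega)
  simp only [qFact] at hkey
  rw [hXp] at hkey hD
  rw [hb1, hb2, hb3] at hD
  rw [hXpsq, hb4, hXp]
  refine ⟨2*V
    + 2*(∏ i ∈ Finset.range (p-1), qInt (i+1))*((X-1)^3*(2*r1+(((p-1).choose 2 : ℕ) : Polynomial ℤ))
        + (X-1)^4*(qInt p)*r1)
    + 2*(∑ i ∈ Finset.range (p-1), ∏ j ∈ (Finset.range (p-1)).erase i, qInt (j+1))
        *((2*(((p-2).choose 2 : ℕ) : Polynomial ℤ)+((p:Polynomial ℤ)-2))*(X-1)^2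
          + (2*r2+(((p-2).choose 2 : ℕ) : Polynomial ℤ))*(X-1)^3*(qInt p)
          + r2*(X-1)^4*(qInt p)^2)
    + (∑ i ∈ Finset.range (p-1), ∑ j ∈ (Finset.range (p-1)).erase i,
        ∏ k ∈ ((Finset.range (p-1)).erase i).erase j, qInt (k+1))
        *((2*((p-3:ℕ) : Polynomial ℤ)+1)*(X-1)
          + (2*(((p-3).choose 2 : ℕ) : Polynomial ℤ)+((p-3:ℕ) : Polynomial ℤ))*(X-1)^2*(qInt p)
          + (2*r3+(((p-3).choose 2 : ℕ) : Polynomial ℤ))*(X-1)^3*(qInt p)^2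
          + r3*(X-1)^4*(qInt p)^3)
    + (2+w)*D
    - 2*(∏ i ∈ Finset.range (p-1), qInt (i+1))*(X-1)^3*r4, ?_⟩
  linear_combination (2:Polynomial ℤ) * hkey + (1+(1+w)) * hD + (2*(qInt p))*hE1
    + (2*(qInt p)^2)*hE2
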